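/- Let μ be a Borel probability measure on ℝ with finite first moment and let f : (0,1) → ℝ be a measurable map such that the image of Lebesgue measure λ on (0,1) under f equals μ. Then for every v ∈ [0,1], ∫_v^1 f(u) du ≤ ∫_v^1 F_μ^{-1}(u) du. -/

import Mathlib

open MeasureTheory Filter Set

noncomputable section

/-- The quantile function of a measure `μ` on `ℝ`:
`F_μ^{-1}(u) = inf {x : μ((-∞, x]) ≥ u}`. -/
def quantile (μ : Measure ℝ) (u : ℝ) : ℝ :=
  sInf {x : ℝ | u ≤ (μ (Iic x)).toReal}

/-- The `p`-Wasserstein distance on the real line, expressed via quantile functions. -/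
def Wp (p : ℝ) (μ ν : Measure ℝ) : ℝ :=
  (∫ u in Ioo (0:ℝ) 1, |quantile μ u - quantile ν u| ^ p) ^ (1 / p)

/-- `μ ∈ P_p(ℝ)`: a Borel probability measure on `ℝ` with finite `p`-th moment. -/
def MemPp (p : ℝ) (μ : Measure ℝ) : Prop :=
  IsProbabilityMeasure μ ∧ Integrable (fun x => |x| ^ p) μ

/-- The convex hull of a function `F` on a set `S`: the greatest convex function on `S`
bounded above by `F` (pointwise supremum of all convex minorants). -/
def convexHullFn (S : Set ℝ) (F : ℝ → ℝ) : ℝ → ℝ :=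
  fun x => sSup {y : ℝ | ∃ g : ℝ → ℝ, ConvexOn ℝ S g ∧ (∀ z ∈ S, g z ≤ F z) ∧ y = g x}

/-- Left-hand derivative. -/
def leftDeriv (f : ℝ → ℝ) (x : ℝ) : ℝ := derivWithin f (Iio x) x

/-- Right-hand derivative. -/
def rightDeriv (f : ℝ → ℝ) (x : ℝ) : ℝ := derivWithin f (Ioi x) x

/-- `G(v) = ∫₀^v (F_μ^{-1}(u) - F_ν^{-1}(u)) du`. -/
def Gfun (μ ν : Measure ℝ) (v : ℝ) : ℝ :=
  ∫ u in Ioo (0:ℝ) v, (quantile μ u - quantile ν u)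

/-- The Wasserstein projection `I(μ,ν)`: the image of Lebesgue measure on `(0,1)` under
`u ↦ F_μ^{-1}(u) - ∂₋ co(G)(u)`. -/
def proj_I (μ ν : Measure ℝ) : Measure ℝ :=
  Measure.map
    (fun u => quantile μ u - leftDeriv (convexHullFn (Icc 0 1) (Gfun μ ν)) u)
    (volume.restrict (Ioo (0:ℝ) 1))

/-- The Wasserstein projection `J(μ,ν)`: the image of Lebesgue measure on `(0,1)` under
`u ↦ F_ν^{-1}(u) + ∂₋ co(G)(u)`. -/
def proj_J (μ ν : Measure ℝ) : Measure ℝ :=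
  Measure.map
    (fun u => quantile ν u + leftDeriv (convexHullFn (Icc 0 1) (Gfun μ ν)) u)
    (volume.restrict (Ioo (0:ℝ) 1))

/-- The convex order `μ ≤_c ν`. -/
def ConvexOrder (μ ν : Measure ℝ) : Prop :=
  ∀ f : ℝ → ℝ, ConvexOn ℝ univ f → Integrable f μ → Integrable f ν →
    ∫ x, f x ∂μ ≤ ∫ x, f x ∂ν

/-- `f` is càdlàg on `[a,b]`: right-continuous on `[a,b)` and with left limits on `(a,b]`. -/
def Cadlag (f : ℝ → ℝ) (a b : ℝ) : Prop :=
  (∀ x ∈ Ico a b, Tendsto f (nhdsWithin x (Ici x)) (nhds (f x))) ∧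
  (∀ x ∈ Ioc a b, ∃ l : ℝ, Tendsto f (nhdsWithin x (Iio x)) (nhds l))


open ProbabilityTheory in
private lemma quantile_eq_cdf (μ : Measure ℝ) [IsProbabilityMeasure μ] (u : ℝ) :
    quantile μ u = sInf {x : ℝ | u ≤ cdf μ x} := by
  simp only [quantile, cdf_eq_real, measureReal_def]

open ProbabilityTheory in
private lemma qset_nonempty {μ : Measure ℝ} {u : ℝ} (hu : u < 1) :
    {x : ℝ | u ≤ cdf μ x}.Nonempty :=
  ((tendsto_cdf_atTop μ).eventually_const_le hu).exists

open ProbabilityTheory in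
private lemma qset_bddBelow {μ : Measure ℝ} {u : ℝ} (hu : 0 < u) :
    BddBelow {x : ℝ | u ≤ cdf μ x} := by
  have h := (tendsto_cdf_atBot μ).eventually_lt_const hu
  rw [eventually_atBot] at h
  obtain ⟨a, ha⟩ := h
  exact ⟨a, fun x hx => by by_contra hc; exact absurd hx (not_le.2 (ha x (le_of_not_ge hc)))⟩

open ProbabilityTheory in
private lemma le_cdf_quantile {μ : Measure ℝ} [IsProbabilityMeasure μ] {u : ℝ}
    (hu0 : 0 < u) (hu1 : u < 1) : u ≤ cdf μ (quantile μ u) := by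
  rw [quantile_eq_cdf]
  set S := {x : ℝ | u ≤ cdf μ x} with hS
  have hne := qset_nonempty (μ := μ) hu1
  have hbdd := qset_bddBelow (μ := μ) hu0
  have h1 : ∀ x ∈ Ioi (sInf S), u ≤ cdf μ x := by
    intro x hx
    obtain ⟨s, hs, hsx⟩ := (csInf_lt_iff hbdd hne).mp hx
    exact le_trans hs ((cdf μ).mono hsx.le)
  have ht : Tendsto (cdf μ) (nhdsWithin (sInf S) (Ioi (sInf S))) (nhds (cdf μ (sInf S))) :=
    ((cdf μ).right_continuous _).mono_left (nhdsWithin_mono _ Ioi_subset_Ici_self)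
  exact ge_of_tendsto ht (eventually_nhdsWithin_of_forall h1)

open ProbabilityTheory in
private lemma quantile_le_iff {μ : Measure ℝ} [IsProbabilityMeasure μ] {u x : ℝ}
    (hu0 : 0 < u) (hu1 : u < 1) : quantile μ u ≤ x ↔ u ≤ cdf μ x := by
  constructor
  · intro h
    exact le_trans (le_cdf_quantile hu0 hu1) ((cdf μ).mono h)
  · intro h
    rw [quantile_eq_cdf]
    exact csInf_le (qset_bddBelow hu0) h

private lemma quantile_monotoneOn' {μ : Measure ℝ} [IsProbabilityMeasure μ] :
    MonotoneOn (quantile μ) (Ioo 0 1) := by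
  intro u hu u' hu' huu'
  rw [quantile_eq_cdf, quantile_eq_cdf]
  exact csInf_le_csInf (qset_bddBelow hu.1) (qset_nonempty hu'.2)
    (fun x hx => le_trans huu' hx)

instance : IsProbabilityMeasure (volume.restrict (Ioo (0:ℝ) 1)) :=
  ⟨by simp [Real.volume_Ioo]⟩

private lemma quantile_aemeasurable' {μ : Measure ℝ} [IsProbabilityMeasure μ] :
    AEMeasurable (quantile μ) (volume.restrict (Ioo (0:ℝ) 1)) :=
  aemeasurable_restrict_of_monotoneOn measurableSet_Ioo quantile_monotoneOn'

open ProbabilityTheory in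
private lemma map_quantile' {μ : Measure ℝ} [IsProbabilityMeasure μ] :
    Measure.map (quantile μ) (volume.restrict (Ioo (0:ℝ) 1)) = μ := by
  have hq := quantile_aemeasurable' (μ := μ)
  have : IsProbabilityMeasure (Measure.map (quantile μ) (volume.restrict (Ioo (0:ℝ) 1))) :=
    Measure.isProbabilityMeasure_map hq
  refine Measure.ext_of_Iic _ _ (fun x => ?_)
  rw [Measure.map_apply_of_aemeasurable hq measurableSet_Iic,
    Measure.restrict_apply' measurableSet_Ioo]
  have hset : quantile μ ⁻¹' Iic x ∩ Ioo 0 1 = Iic (cdf μ x) ∩ Ioo 0 1 := by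
    ext u
    simp only [mem_inter_iff, mem_preimage, mem_Iic, mem_Ioo, and_congr_left_iff]
    intro hu
    rw [quantile_le_iff hu.1 hu.2]
  rw [hset]
  have h0 : 0 ≤ cdf μ x := cdf_nonneg μ x
  have h1 : cdf μ x ≤ 1 := cdf_le_one μ x
  have hμ : μ (Iic x) = ENNReal.ofReal (cdf μ x) := by
    rw [cdf_eq_real, measureReal_def, ENNReal.ofReal_toReal (measure_ne_top μ _)]
  rw [hμ]
  rcases lt_or_eq_of_le h1 with h | h
  · have : Iic (cdf μ x) ∩ Ioo 0 1 = Ioc 0 (cdf μ x) := by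
      ext u
      simp only [mem_inter_iff, mem_Iic, mem_Ioo, mem_Ioc]
      constructor
      · rintro ⟨h1, h2, h3⟩; exact ⟨h2, h1⟩
      · rintro ⟨h1, h2⟩; exact ⟨h2, h1, lt_of_le_of_lt h2 h⟩
    rw [this, Real.volume_Ioc, sub_zero]
  · have : Iic (cdf μ x) ∩ Ioo 0 1 = Ioo 0 1 := by
      rw [inter_eq_right]; intro u hu; exact le_trans hu.2.le (h.ge)
    rw [this, Real.volume_Ioo, ← h, sub_zero]


/-- if `f` pushes Lebesgue measure on `(0,1)` forward to `μ` (with finite first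
moment), then `∫_v^1 f(u) du ≤ ∫_v^1 F_μ^{-1}(u) du` for all `v ∈ [0,1]`. -/
theorem quantile_increasing_ordering (μ : Measure ℝ) [IsProbabilityMeasure μ]
    (hmom : Integrable (fun x => |x|) μ)
    (f : ℝ → ℝ) (hmeas : Measurable f)
    (hmap : Measure.map f (volume.restrict (Ioo (0:ℝ) 1)) = μ) :
    ∀ v ∈ Icc (0:ℝ) 1,
      (∫ u in Ioo v 1, f u) ≤ ∫ u in Ioo v 1, quantile μ u := by
  set L := volume.restrict (Ioo (0:ℝ) 1) with hL
  have hid : Integrable (fun x : ℝ => x) μ :=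
    (integrable_norm_iff aestronglyMeasurable_id).mp
      (by simpa [Real.norm_eq_abs] using hmom)
  have hf_int : Integrable f L :=
    (integrable_map_measure aestronglyMeasurable_id hmeas.aemeasurable).mp
      (by rw [hmap]; exact hid)
  have hq_int : Integrable (quantile μ) L :=
    (integrable_map_measure aestronglyMeasurable_id (quantile_aemeasurable' (μ := μ))).mp
      (by rw [map_quantile' (μ := μ)]; exact hid)
  intro v hv
  rcases eq_or_lt_of_le hv.2 with h1 | h1
  · simp [h1]
  rcases eq_or_lt_of_le hv.1 with h0 | h0
  · -- v = 0 : equality of integrals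
    subst h0
    have hfl : (∫ u in Ioo (0:ℝ) 1, f u) = ∫ x, x ∂μ := by
      have := integral_map (μ := L) (f := fun x : ℝ => x) hmeas.aemeasurable aestronglyMeasurable_id
      rw [hmap] at this
      exact this.symm
    have hql : (∫ u in Ioo (0:ℝ) 1, quantile μ u) = ∫ x, x ∂μ := by
      have := integral_map (μ := L) (f := fun x : ℝ => x) (quantile_aemeasurable' (μ := μ))
        aestronglyMeasurable_id
      rw [map_quantile' (μ := μ)] at this
      exact this.symm
    rw [hfl, hql]
  · -- 0 < v < 1
    set q := quantile μ v with hqdef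
    have hvm : v ∈ Ioo (0:ℝ) 1 := ⟨h0, h1⟩
    have hsub : Ioo v 1 ⊆ Ioo (0:ℝ) 1 := Ioo_subset_Ioo h0.le le_rfl
    have hsub2 : Ioc 0 v ⊆ Ioo (0:ℝ) 1 := fun u hu => ⟨hu.1, lt_of_le_of_lt hu.2 h1⟩
    have hvol : (volume (Ioo v 1)).toReal = 1 - v := by
      rw [Real.volume_Ioo, ENNReal.toReal_ofReal (by linarith)]
    have hgc : Continuous (fun x : ℝ => max (x - q) 0) :=
      (continuous_id.sub continuous_const).max continuous_const
    -- integrabilities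
    have hf_on : IntegrableOn f (Ioo (0:ℝ) 1) volume := hf_int
    have hq_on : IntegrableOn (quantile μ) (Ioo (0:ℝ) 1) volume := hq_int
    have hf_int_v : IntegrableOn f (Ioo v 1) volume := hf_on.mono_set hsub
    have hq_int_v : IntegrableOn (quantile μ) (Ioo v 1) volume := hq_on.mono_set hsub
    have hfp_int : Integrable (fun u => max (f u - q) 0) L :=
      (hf_int.sub (integrable_const q)).pos_part
    have hfp_on : IntegrableOn (fun u => max (f u - q) 0) (Ioo (0:ℝ) 1) volume := hfp_int
    have hfp_int_v : IntegrableOn (fun u => max (f u - q) 0) (Ioo v 1) volume :=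
      hfp_on.mono_set hsub
    have hqp_int : Integrable (fun u => max (quantile μ u - q) 0) L :=
      (hq_int.sub (integrable_const q)).pos_part
    have hqp_on : IntegrableOn (fun u => max (quantile μ u - q) 0) (Ioo (0:ℝ) 1) volume := hqp_int
    -- step 1
    have step1 : (∫ u in Ioo v 1, f u) ≤ ∫ u in Ioo v 1, (max (f u - q) 0 + q) := by
      refine integral_mono hf_int_v (hfp_int_v.add (integrable_const q)) (fun u => ?_)
      have : f u - q ≤ max (f u - q) 0 := le_max_left _ _
      linarith
    have step2 : (∫ u in Ioo v 1, (max (f u - q) 0 + q))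
        = (∫ u in Ioo v 1, max (f u - q) 0) + (1 - v) * q := by
      rw [integral_add hfp_int_v (integrable_const q), setIntegral_const, measureReal_def, hvol, smul_eq_mul]
    have step3 : (∫ u in Ioo v 1, max (f u - q) 0) ≤ ∫ u in Ioo (0:ℝ) 1, max (f u - q) 0 := by
      refine setIntegral_mono_set hfp_int ?_ (HasSubset.Subset.eventuallyLE hsub)
      exact Eventually.of_forall (fun u => le_max_right _ _)
    have step4 : (∫ u in Ioo (0:ℝ) 1, max (f u - q) 0) = ∫ x, max (x - q) 0 ∂μ := by
      have := integral_map (μ := L) (f := fun x : ℝ => max (x - q) 0) hmeas.aemeasurable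
        hgc.aestronglyMeasurable
      rw [hmap] at this
      exact this.symm
    have step5 : (∫ x, max (x - q) 0 ∂μ) = ∫ u in Ioo (0:ℝ) 1, max (quantile μ u - q) 0 := by
      have := integral_map (μ := L) (f := fun x : ℝ => max (x - q) 0) (quantile_aemeasurable' (μ := μ))
        hgc.aestronglyMeasurable
      rw [map_quantile' (μ := μ)] at this
      exact this
    have hsplit : Ioo (0:ℝ) 1 = Ioc 0 v ∪ Ioo v 1 := (Ioc_union_Ioo_eq_Ioo h0.le h1).symm
    have hdisj : Disjoint (Ioc (0:ℝ) v) (Ioo v 1) := by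
      rw [Set.disjoint_left]
      rintro u hu1 hu2
      exact absurd hu1.2 (not_le.2 hu2.1)
    have step6 : (∫ u in Ioo (0:ℝ) 1, max (quantile μ u - q) 0)
        = ∫ u in Ioo v 1, max (quantile μ u - q) 0 := by
      have hzero : EqOn (fun u => max (quantile μ u - q) 0) (fun _ => (0:ℝ)) (Ioc 0 v) := by
        intro u hu
        have : quantile μ u ≤ q := quantile_monotoneOn' (hsub2 hu) hvm hu.2
        simp only [max_eq_right (by linarith : quantile μ u - q ≤ 0)]
      rw [hsplit, setIntegral_union hdisj measurableSet_Ioo (hqp_on.mono_set hsub2)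
          (hqp_on.mono_set hsub),
        setIntegral_congr_fun measurableSet_Ioc hzero, integral_zero, zero_add]
    have step7 : (∫ u in Ioo v 1, max (quantile μ u - q) 0)
        = ∫ u in Ioo v 1, (quantile μ u - q) := by
      refine setIntegral_congr_fun measurableSet_Ioo (fun u hu => ?_)
      have : q ≤ quantile μ u := quantile_monotoneOn' hvm (hsub hu) hu.1.le
      exact max_eq_left (by linarith)
    have step8 : (∫ u in Ioo v 1, (quantile μ u - q))
        = (∫ u in Ioo v 1, quantile μ u) - (1 - v) * q := by
      rw [integral_sub hq_int_v (integrable_const q), setIntegral_const, measureReal_def, hvol, smul_eq_mul]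
    calc (∫ u in Ioo v 1, f u) ≤ (∫ u in Ioo v 1, max (f u - q) 0) + (1 - v) * q := by
          rw [← step2]; exact step1
      _ ≤ (∫ u in Ioo (0:ℝ) 1, max (f u - q) 0) + (1 - v) * q := by linarith
      _ = (∫ u in Ioo v 1, quantile μ u) := by
          rw [step4, step5, step6, step7, step8]; ring

end
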